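/- Let R be a commutative ring and let m, n be positive integers such that m/gcd(m, n) has at least two distinct prime factors. Then R[X]/(Φ_m(X)) is (X^n − 1)-torsion-free: multiplication by the class of X^n − 1 is injective on the quotient ring R[X]/(Φ_m(X)). -/

import Mathlib

open Polynomial

/-- `Φ_{dk}` divides `expand d Φ_k` over any commutative ring. -/
lemma cyclotomic_mul_dvd_expand_cyclotomic {R : Type*} [CommRing R] (d k : ℕ) :
    cyclotomic (d * k) R ∣ expand R d (cyclotomic k R) := by
  induction d using Nat.recOnMul generalizing k with
  | zero => simp [cyclotomic_zero]
  | one => rw [one_mul, expand_one]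
  | prime p hp =>
    by_cases hdvd : p ∣ k
    · rw [cyclotomic_expand_eq_cyclotomic hp hdvd, mul_comm]
    · rw [cyclotomic_expand_eq_cyclotomic_mul hp hdvd, mul_comm p k]
      exact dvd_mul_right _ _
  | mul a b ha hb =>
    calc cyclotomic (a * b * k) R = cyclotomic (a * (b * k)) R := by rw [mul_assoc]
      _ ∣ expand R a (cyclotomic (b * k) R) := ha _
      _ ∣ expand R a (expand R b (cyclotomic k R)) := by
        obtain ⟨c, hc⟩ := hb k
        exact ⟨expand R a c, by rw [hc, map_mul]⟩
      _ = expand R (a * b) (cyclotomic k R) := expand_expand a b _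

/-- If `m / gcd(m,n)` has at least two distinct prime factors, then multiplication by the class
of `X^n - 1` is injective on `R[X]/(Φ_m)`. -/
theorem stmt6 {R : Type*} [CommRing R] (m n : ℕ) (hm : 0 < m) (hn : 0 < n)
    (h : 2 ≤ (m / Nat.gcd m n).primeFactors.card) :
    Function.Injective (fun y : R[X] ⧸ Ideal.span {cyclotomic m R} =>
      Ideal.Quotient.mk (Ideal.span {cyclotomic m R}) ((X : R[X]) ^ n - 1) * y) := by
  set d := Nat.gcd m n with hd
  set k := m / d with hk
  have hdm : d ∣ m := Nat.gcd_dvd_left m n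
  have hdk : d * k = m := Nat.mul_div_cancel' hdm
  -- `k` is not a prime power
  have hknotpp : ∀ p : ℕ, p.Prime → ∀ l : ℕ, p ^ l ≠ k := by
    intro p hp l hpl
    rcases Nat.eq_zero_or_pos l with rfl | hl
    · rw [pow_zero] at hpl
      rw [← hpl] at h
      simp at h
    · rw [← hpl, Nat.primeFactors_prime_pow hl.ne' hp] at h
      simp at h
  -- Show the ideal `(Φ_m, X^n - 1)` is the whole ring
  have htop : Ideal.span ({cyclotomic m R, X ^ n - 1} : Set R[X]) = ⊤ := by
    set I := Ideal.span ({cyclotomic m R, X ^ n - 1} : Set R[X]) with hI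
    by_contra hne
    set π := Ideal.Quotient.mk I with hπ
    have hΦ : π (cyclotomic m R) = 0 :=
      Ideal.Quotient.eq_zero_iff_mem.2 (Ideal.subset_span (by simp))
    have hXn : π X ^ n = 1 := by
      have : π (X ^ n - 1) = 0 :=
        Ideal.Quotient.eq_zero_iff_mem.2 (Ideal.subset_span (by simp))
      rw [map_sub, map_pow, map_one, sub_eq_zero] at this
      exact this
    have hXm : π X ^ m = 1 := by
      have : π (X ^ m - 1) = 0 := by
        obtain ⟨c, hc⟩ := cyclotomic.dvd_X_pow_sub_one m R
        rw [hc, map_mul, hΦ, zero_mul]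
      rw [map_sub, map_pow, map_one, sub_eq_zero] at this
      exact this
    -- `π X` is a unit of order dividing `d`
    have hu : IsUnit (π X) := by
      refine IsUnit.of_mul_eq_one (π X ^ (n - 1)) ?_
      rw [← pow_succ', Nat.sub_add_cancel hn, hXn]
    obtain ⟨u, hux⟩ := hu
    have hum : u ^ m = 1 := Units.ext (by rw [Units.val_pow_eq_pow_val, hux, hXm, Units.val_one])
    have hun : u ^ n = 1 := Units.ext (by rw [Units.val_pow_eq_pow_val, hux, hXn, Units.val_one])
    have hud : u ^ d = 1 :=
      orderOf_dvd_iff_pow_eq_one.1 <|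
        Nat.dvd_gcd (orderOf_dvd_of_pow_eq_one hum) (orderOf_dvd_of_pow_eq_one hun)
    have hXd : π X ^ d = 1 := by
      have := congrArg (Units.val) hud
      rwa [Units.val_pow_eq_pow_val, hux, Units.val_one] at this
    -- image of `expand d Φ_k` is both 0 and 1
    have h0 : π (expand R d (cyclotomic k R)) = 0 := by
      obtain ⟨c, hc⟩ := cyclotomic_mul_dvd_expand_cyclotomic (R := R) d k
      rw [hdk] at hc
      rw [hc, map_mul, hΦ, zero_mul]
    have h1 : π (expand R d (cyclotomic k R)) = 1 := by
      have heq : π (expand R d (cyclotomic k R))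
          = eval₂ (π.comp Polynomial.C) (π X ^ d) (cyclotomic k R) := by
        rw [expand_eq_comp_X_pow]
        rw [← Polynomial.eval₂_C_X (p := (cyclotomic k R).comp (X ^ d)), Polynomial.hom_eval₂,
          Polynomial.eval₂_comp]
        simp
      rw [heq, hXd, Polynomial.eval₂_at_one,
        eval_one_cyclotomic_not_prime_pow (fun hp l hl => hknotpp _ hp l hl)]
      simp
    rw [h0] at h1
    exact hne (Ideal.Quotient.subsingleton_iff.1 (subsingleton_of_zero_eq_one h1) ▸ rfl)
  -- conclude: `X^n - 1` is a unit mod `Φ_m`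
  have hmem : (1 : R[X]) ∈ Ideal.span ({cyclotomic m R, X ^ n - 1} : Set R[X]) := by
    rw [htop]; trivial
  obtain ⟨a, b, hab⟩ := Ideal.mem_span_pair.1 hmem
  have hunit : IsUnit (Ideal.Quotient.mk (Ideal.span {cyclotomic m R}) ((X : R[X]) ^ n - 1)) := by
    refine IsUnit.of_mul_eq_one (Ideal.Quotient.mk _ b) ?_
    have key : ((X : R[X]) ^ n - 1) * b = 1 - a * cyclotomic m R := by linear_combination hab
    rw [← map_mul, key, map_sub, map_one, map_mul, Ideal.Quotient.eq_zero_iff_mem.2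
      (Ideal.mem_span_singleton_self _), mul_zero, sub_zero]
  exact hunit.mul_right_injective
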